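/- arXiv:2410.15213 — 4 statements merged into one kernel-verified Lean document; each statement's English description precedes it below -/
import Mathlib

section
/- If u and v are vertices of a graph G with N(u) \ {v} ⊆ N(v), then the biclique vertex partition number of G is at most that of G − v, i.e., bp(G) ≤ bp(G − v). -/
open SimpleGraph CategoryTheory

namespace Paper

variable {V : Type} {W : Type}

/-- The 1-subdivision of a graph `G`: each edge is replaced by a path of
length two, by inserting a new vertex (the edge itself) on every edge. -/
def subdiv (G : SimpleGraph V) : SimpleGraph (V ⊕ G.edgeSet) where
  Adj x y :=
    match x, y with
    | Sum.inl v, Sum.inr e => v ∈ (e : Sym2 V)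
    | Sum.inr e, Sum.inl v => v ∈ (e : Sym2 V)
    | _, _ => False
  symm := by
    constructor
    rintro (v | e) (w | f) h
    · exact h.elim
    · exact h
    · exact h
    · exact h.elim
  loopless := by constructor; rintro (v | e) h <;> exact h.elim

/-- The geometric realization of the independence complex of a graph:
convex combinations of vertices whose support is an independent set. -/
def indRealization (G : SimpleGraph V) : Type :=
  {f : V → ℝ // (∀ v, 0 ≤ f v) ∧ (∑ᶠ v, f v) = 1 ∧
     ∀ u v, f u ≠ 0 → f v ≠ 0 → ¬ G.Adj u v}

instance (G : SimpleGraph V) : TopologicalSpace (indRealization G) := by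
  delta indRealization; infer_instance

/-- The singular chain complex of a space, with rational coefficients. -/
noncomputable def singularChains (X : Type) [TopologicalSpace X] :
    ChainComplex (ModuleCat ℚ) ℕ :=
  (AlgebraicTopology.alternatingFaceMapComplex (ModuleCat ℚ)).obj
    (((SimplicialObject.whiskering _ _).obj (ModuleCat.free ℚ)).obj
      (TopCat.toSSet.obj (TopCat.of X)))

/-- Nontriviality of the `n`-th singular homology with rational coefficients. -/
def homologyNontrivial (X : Type) [TopologicalSpace X] (n : ℕ) : Prop :=
  Nontrivial ((singularChains X).homology n)

/-- Nontriviality of the reduced singular homology (rational coefficients)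
in degree `n : ℤ`. -/
def reducedHomologyNontrivial (X : Type) [TopologicalSpace X] : ℤ → Prop
  | Int.negSucc 0 => IsEmpty X
  | Int.negSucc (_ + 1) => False
  | Int.ofNat 0 => ∃ x y : X, ¬ Joined x y
  | Int.ofNat (n + 1) => homologyNontrivial X (n + 1)

/-- The Castelnuovo–Mumford regularity of a graph: the largest `j` such that
some induced subcomplex of the independence complex has nontrivial reduced
homology in dimension `j - 1`. -/
noncomputable def greg {V : Type} (G : SimpleGraph V) : ℕ :=
  sSup { j : ℕ |
    ∃ S : Set V, reducedHomologyNontrivial (indRealization (G.induce S)) ((j : ℤ) - 1) }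

/-- `X, Y : Fin k → Finset V` describe a partition of the vertex set of `G`
into `k` (not necessarily induced) bicliques with sides `X i` and `Y i`. -/
def IsBicliquePartition (G : SimpleGraph V) (k : ℕ) (X Y : Fin k → Finset V) : Prop :=
  (∀ i, (X i).Nonempty) ∧ (∀ i, Disjoint (X i) (Y i)) ∧
  (∀ i, ∀ x ∈ X i, ∀ y ∈ Y i, G.Adj x y) ∧
  (∀ v : V, ∃! i : Fin k, v ∈ X i ∨ v ∈ Y i)

/-- The biclique vertex partition number `bp G`. -/
noncomputable def bp (G : SimpleGraph V) : ℕ :=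
  sInf { k | ∃ X Y : Fin k → Finset V, IsBicliquePartition G k X Y }

/-- `γ(A, G)`: the least size of a vertex set dominating `A`. -/
noncomputable def domNum (G : SimpleGraph V) (A : Set V) : ℕ :=
  sInf { n | ∃ D : Finset V, D.card = n ∧ ∀ a ∈ A, ∃ d ∈ D, d = a ∨ G.Adj d a }

/-- The domination number `γ(G)`. -/
noncomputable def gamma (G : SimpleGraph V) : ℕ := domNum G Set.univ

/-- The independence domination number `γ^i(G)`: the maximum of `γ(I, G)` over
independent sets `I` consisting of non-isolated vertices. -/
noncomputable def iDom (G : SimpleGraph V) : ℕ :=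
  sSup { n | ∃ I : Set V, (∀ v ∈ I, ∃ w, G.Adj v w) ∧
      (∀ u ∈ I, ∀ v ∈ I, ¬ G.Adj u v) ∧ n = domNum G I }

/-- `M` is an induced matching of `G`. -/
def IsInducedMatching (G : SimpleGraph V) (M : Finset (Sym2 V)) : Prop :=
  ((M : Set (Sym2 V)) ⊆ G.edgeSet) ∧
  ∀ e ∈ M, ∀ f ∈ M, e ≠ f → ∀ u ∈ e, ∀ v ∈ f, u ≠ v ∧ ¬ G.Adj u v

/-- The induced matching number of `G`. -/
noncomputable def imNum (G : SimpleGraph V) : ℕ :=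
  sSup { n | ∃ M : Finset (Sym2 V), IsInducedMatching G M ∧ M.card = n }

/-- A simple vertex: the neighborhoods of its neighbors are linearly
ordered by inclusion. -/
def IsSimpleVertex (G : SimpleGraph V) (x : V) : Prop :=
  ∀ u v : V, G.Adj x u → G.Adj x v →
    G.neighborSet u ⊆ G.neighborSet v ∨ G.neighborSet v ⊆ G.neighborSet u

/-- A bisimplicial edge `uv`: every vertex of `N(u) \ {v}` is adjacent to
every vertex of `N(v) \ {u}`, i.e. `N[e]` induces a complete bipartite graph. -/
def IsBisimplicialEdge (G : SimpleGraph V) (u v : V) : Prop :=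
  G.Adj u v ∧ ∀ a b : V, G.Adj u a → a ≠ v → G.Adj v b → b ≠ u → G.Adj a b

/-- A chordal bipartite graph: bipartite with no induced cycle of length
greater than four. -/
def ChordalBipartite (G : SimpleGraph V) : Prop :=
  G.Colorable 2 ∧ ∀ n : ℕ, 4 < n → IsEmpty (cycleGraph n ↪g G)

/-- Attach a pendant vertex (whisker) `w : W` at the vertex `φ w` for each `w`. -/
def addPendants (G : SimpleGraph V) (φ : W → V) : SimpleGraph (V ⊕ W) where
  Adj x y :=
    match x, y with
    | Sum.inl a, Sum.inl b => G.Adj a b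
    | Sum.inl a, Sum.inr w => a = φ w
    | Sum.inr w, Sum.inl a => a = φ w
    | Sum.inr _, Sum.inr _ => False
  symm := by
    constructor
    rintro (a | w) (b | x) h
    · exact h.symm
    · exact h
    · exact h
    · exact h.elim
  loopless := by
    constructor
    rintro (a | w) h
    · exact G.loopless.irrefl a h
    · exact h.elim

/-- The closed neighborhood, inside the vertex set `Ws`, of the edge `uv`. -/
def closedEdgeNbhdOn (G : SimpleGraph V) (Ws : Set V) (u v : V) : Set V :=
  {w ∈ Ws | w = u ∨ w = v ∨ G.Adj u w ∨ G.Adj v w}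

/-- The vertex sets `B_i` remaining after successively removing the closed
neighborhoods of the edges `e 0, e 1, …`. -/
def remSet (G : SimpleGraph V) (e : ℕ → V × V) : ℕ → Set V
  | 0 => Set.univ
  | i + 1 => remSet G e i \ closedEdgeNbhdOn G (remSet G e i) (e i).1 (e i).2

/-- A simple vertex of the subgraph induced on `Ws`. -/
def SimpleVertexOn (G : SimpleGraph V) (Ws : Set V) (x : V) : Prop :=
  x ∈ Ws ∧ ∀ u ∈ Ws, ∀ v ∈ Ws, G.Adj x u → G.Adj x v →
    ({a ∈ Ws | G.Adj u a} ⊆ {a ∈ Ws | G.Adj v a} ∨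
     {a ∈ Ws | G.Adj v a} ⊆ {a ∈ Ws | G.Adj u a})

/-- A bisimplicial edge of the subgraph induced on `Ws`. -/
def BisimplicialOn (G : SimpleGraph V) (Ws : Set V) (u v : V) : Prop :=
  u ∈ Ws ∧ v ∈ Ws ∧ G.Adj u v ∧
    ∀ a ∈ Ws, ∀ b ∈ Ws, G.Adj u a → a ≠ v → G.Adj v b → b ≠ u → G.Adj a b

/-- `e 0, …, e (k-1)` is a biclique elimination sequence for `G`. -/
def IsBES (G : SimpleGraph V) (k : ℕ) (e : ℕ → V × V) : Prop :=
  (∀ i < k, BisimplicialOn G (remSet G e i) (e i).1 (e i).2) ∧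
  ∀ u ∈ remSet G e k, ∀ v ∈ remSet G e k, ¬ G.Adj u v

/-- A simple biclique elimination sequence. -/
def IsSimpleBES (G : SimpleGraph V) (k : ℕ) (e : ℕ → V × V) : Prop :=
  IsBES G k e ∧
  ∀ i < k, SimpleVertexOn G (remSet G e i) (e i).1 ∨
           SimpleVertexOn G (remSet G e i) (e i).2

/-- A complete simple biclique elimination sequence: no deletion step ever
leaves an isolated vertex behind. -/
def IsCompleteSBES (G : SimpleGraph V) (k : ℕ) (e : ℕ → V × V) : Prop :=
  IsSimpleBES G k e ∧
  ∀ i < k, ∀ w ∈ remSet G e (i + 1), ∃ w' ∈ remSet G e (i + 1), G.Adj w w'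

/-- `v` is covered by (incident to) an edge of `M`. -/
def coveredBy (M : Finset (Sym2 V)) (v : V) : Prop := ∃ e ∈ M, v ∈ e

/-- The class `Γ`: connected bipartite graphs of minimum degree at least two,
with an induced matching `M` with `|M| > |V|/3` such that every uncovered
vertex is adjacent to endpoints of at least two distinct edges of `M`. -/
def InGamma (G : SimpleGraph V) (M : Finset (Sym2 V)) : Prop :=
  G.Colorable 2 ∧ G.Connected ∧
  (∀ v : V, ∃ w w' : V, w ≠ w' ∧ G.Adj v w ∧ G.Adj v w') ∧
  IsInducedMatching G M ∧
  3 * M.card > Nat.card V ∧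
  (∀ v : V, ¬ coveredBy M v →
    ∃ e ∈ M, ∃ f ∈ M, e ≠ f ∧ (∃ x ∈ e, G.Adj v x) ∧ (∃ y ∈ f, G.Adj v y))

/-- If `N(u) \ {v} ⊆ N(v)` then `bp(G) ≤ bp(G - v)`. -/
theorem bp_le_bp_deleteVertex {V : Type} [Fintype V] (G : SimpleGraph V)
    (u v : V) (hne : u ≠ v)
    (h : G.neighborSet u \ {v} ⊆ G.neighborSet v) :
    bp G ≤ bp (G.induce {w | w ≠ v}) := by
  classical
  set S : Set V := {w | w ≠ v} with hS
  have huS : u ∈ S := hne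
  have himg : ∀ (T : Finset ↥S) (w : V), w ∈ T.image Subtype.val ↔
      ∃ hw : w ∈ S, (⟨w, hw⟩ : ↥S) ∈ T := by
    intro T w
    constructor
    · intro hw
      obtain ⟨a, ha, rfl⟩ := Finset.mem_image.mp hw
      exact ⟨a.2, by simpa using ha⟩
    · rintro ⟨hw, hmem⟩
      exact Finset.mem_image.mpr ⟨⟨w, hw⟩, hmem, rfl⟩
  have hvnot : ∀ (T : Finset ↥S), v ∉ T.image Subtype.val := by
    intro T hv
    obtain ⟨hv', _⟩ := (himg T v).mp hv
    exact hv' rfl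
  have hnonempty : {k | ∃ X Y : Fin k → Finset ↥S,
      IsBicliquePartition (G.induce S) k X Y}.Nonempty := by
    refine ⟨Fintype.card ↥S, fun i => {(Fintype.equivFin ↥S).symm i}, fun _ => ∅,
      fun i => ⟨_, Finset.mem_singleton_self _⟩, fun i => by simp,
      fun i x hx y hy => by simp at hy, fun w => ?_⟩
    refine ⟨Fintype.equivFin ↥S w, Or.inl (by simp), ?_⟩
    rintro j (hj | hj)
    · rw [Finset.mem_singleton] at hj
      simp [hj]
    · simp at hj
  set k := sInf {k | ∃ X Y : Fin k → Finset ↥S,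
      IsBicliquePartition (G.induce S) k X Y} with hk
  have hbp : bp (G.induce S) = k := rfl
  rw [hbp]
  have hmem : k ∈ {k | ∃ X Y : Fin k → Finset ↥S,
      IsBicliquePartition (G.induce S) k X Y} := Nat.sInf_mem hnonempty
  obtain ⟨X, Y, hX1, hdisj, hadj, huniq⟩ := hmem
  have hIndAdj : ∀ a b : ↥S, (G.induce S).Adj a b ↔ G.Adj (a : V) (b : V) := by
    intro a b; rfl
  set u' : ↥S := ⟨u, huS⟩ with hu'
  obtain ⟨i₀, hi₀, _⟩ := huniq u'
  have hkey : ∀ b : ↥S, G.Adj u (b : V) → G.Adj v (b : V) := by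
    intro b hb
    exact h ⟨hb, b.2⟩
  rcases hi₀ with hXi | hYi
  · -- u' ∈ X i₀ : insert v into X i₀
    refine Nat.sInf_le ⟨fun j => if j = i₀ then insert v ((X j).image Subtype.val)
        else (X j).image Subtype.val,
      fun j => (Y j).image Subtype.val, ?_, ?_, ?_, ?_⟩
    · intro j
      by_cases hj : j = i₀
      · simp only [if_pos hj]
        exact ⟨v, Finset.mem_insert_self _ _⟩
      · simp only [if_neg hj]
        obtain ⟨a, ha⟩ := hX1 j
        exact ⟨a, Finset.mem_image.mpr ⟨a, ha, rfl⟩⟩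
    · intro j
      have hbase : Disjoint ((X j).image Subtype.val) ((Y j).image Subtype.val) :=
        (Finset.disjoint_image Subtype.val_injective).mpr (hdisj j)
      by_cases hj : j = i₀
      · simp only [if_pos hj, Finset.disjoint_insert_left]
        exact ⟨hvnot _, hbase⟩
      · simp only [if_neg hj]
        exact hbase
    · intro j x hx y hy
      obtain ⟨hyS, hy'⟩ := (himg _ y).mp hy
      by_cases hj : j = i₀
      · simp only [if_pos hj, Finset.mem_insert] at hx
        subst hj
        rcases hx with rfl | hx
        · have hub : G.Adj u (⟨y, hyS⟩ : ↥S) :=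
            (hIndAdj u' ⟨y, hyS⟩).mp (hadj j u' hXi ⟨y, hyS⟩ hy')
          exact hkey ⟨y, hyS⟩ hub
        · obtain ⟨hxS, hx'⟩ := (himg _ x).mp hx
          exact (hIndAdj ⟨x, hxS⟩ ⟨y, hyS⟩).mp (hadj j ⟨x, hxS⟩ hx' ⟨y, hyS⟩ hy')
      · simp only [if_neg hj] at hx
        obtain ⟨hxS, hx'⟩ := (himg _ x).mp hx
        exact (hIndAdj ⟨x, hxS⟩ ⟨y, hyS⟩).mp (hadj j ⟨x, hxS⟩ hx' ⟨y, hyS⟩ hy')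
    · intro w
      by_cases hw : w = v
      · subst hw
        refine ⟨i₀, Or.inl (by simp only [if_pos rfl]; exact Finset.mem_insert_self _ _), ?_⟩
        rintro j (hj | hj)
        · by_cases hji : j = i₀
          · exact hji
          · simp only [if_neg hji] at hj
            exact absurd hj (hvnot _)
        · exact absurd hj (hvnot _)
      · have hwS : w ∈ S := hw
        obtain ⟨j₀, hj₀, hj₀u⟩ := huniq ⟨w, hwS⟩
        have hXiff : ∀ j, (w ∈ if j = i₀ then insert v ((X j).image Subtype.val)
            else (X j).image Subtype.val) ↔ (⟨w, hwS⟩ : ↥S) ∈ X j := by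
          intro j
          by_cases hj : j = i₀
          · simp only [if_pos hj, Finset.mem_insert]
            constructor
            · rintro (rfl | hw')
              · exact absurd rfl hw
              · exact ((himg _ w).mp hw').2
            · intro hw'
              exact Or.inr ((himg _ w).mpr ⟨hwS, hw'⟩)
          · simp only [if_neg hj]
            exact ⟨fun hw' => ((himg _ w).mp hw').2, fun hw' => (himg _ w).mpr ⟨hwS, hw'⟩⟩
        have hYiff : ∀ j, w ∈ (Y j).image Subtype.val ↔ (⟨w, hwS⟩ : ↥S) ∈ Y j :=
          fun j => ⟨fun hw' => ((himg _ w).mp hw').2, fun hw' => (himg _ w).mpr ⟨hwS, hw'⟩⟩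
        exact ⟨j₀, by simp only [hXiff, hYiff]; exact hj₀,
          fun j hj => hj₀u j (by simp only [hXiff j, hYiff j] at hj; exact hj)⟩
  · -- u' ∈ Y i₀ : insert v into Y i₀
    refine Nat.sInf_le ⟨fun j => (X j).image Subtype.val,
      fun j => if j = i₀ then insert v ((Y j).image Subtype.val)
        else (Y j).image Subtype.val, ?_, ?_, ?_, ?_⟩
    · intro j
      obtain ⟨a, ha⟩ := hX1 j
      exact ⟨a, Finset.mem_image.mpr ⟨a, ha, rfl⟩⟩
    · intro j
      have hbase : Disjoint ((X j).image Subtype.val) ((Y j).image Subtype.val) :=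
        (Finset.disjoint_image Subtype.val_injective).mpr (hdisj j)
      by_cases hj : j = i₀
      · simp only [if_pos hj, Finset.disjoint_insert_right]
        exact ⟨hvnot _, hbase⟩
      · simp only [if_neg hj]
        exact hbase
    · intro j x hx y hy
      obtain ⟨hxS, hx'⟩ := (himg _ x).mp hx
      by_cases hj : j = i₀
      · simp only [if_pos hj, Finset.mem_insert] at hy
        subst hj
        rcases hy with rfl | hy
        · have hub : G.Adj u (⟨x, hxS⟩ : ↥S) :=
            ((hIndAdj ⟨x, hxS⟩ u').mp (hadj j ⟨x, hxS⟩ hx' u' hYi)).symm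
          exact (hkey ⟨x, hxS⟩ hub).symm
        · obtain ⟨hyS, hy'⟩ := (himg _ y).mp hy
          exact (hIndAdj ⟨x, hxS⟩ ⟨y, hyS⟩).mp (hadj j ⟨x, hxS⟩ hx' ⟨y, hyS⟩ hy')
      · simp only [if_neg hj] at hy
        obtain ⟨hyS, hy'⟩ := (himg _ y).mp hy
        exact (hIndAdj ⟨x, hxS⟩ ⟨y, hyS⟩).mp (hadj j ⟨x, hxS⟩ hx' ⟨y, hyS⟩ hy')
    · intro w
      by_cases hw : w = v
      · subst hw
        refine ⟨i₀, Or.inr (by simp only [if_pos rfl]; exact Finset.mem_insert_self _ _), ?_⟩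
        rintro j (hj | hj)
        · exact absurd hj (hvnot _)
        · by_cases hji : j = i₀
          · exact hji
          · simp only [if_neg hji] at hj
            exact absurd hj (hvnot _)
      · have hwS : w ∈ S := hw
        obtain ⟨j₀, hj₀, hj₀u⟩ := huniq ⟨w, hwS⟩
        have hXiff : ∀ j, w ∈ (X j).image Subtype.val ↔ (⟨w, hwS⟩ : ↥S) ∈ X j :=
          fun j => ⟨fun hw' => ((himg _ w).mp hw').2, fun hw' => (himg _ w).mpr ⟨hwS, hw'⟩⟩
        have hYiff : ∀ j, (w ∈ if j = i₀ then insert v ((Y j).image Subtype.val)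
            else (Y j).image Subtype.val) ↔ (⟨w, hwS⟩ : ↥S) ∈ Y j := by
          intro j
          by_cases hj : j = i₀
          · simp only [if_pos hj, Finset.mem_insert]
            constructor
            · rintro (rfl | hw')
              · exact absurd rfl hw
              · exact ((himg _ w).mp hw').2
            · intro hw'
              exact Or.inr ((himg _ w).mpr ⟨hwS, hw'⟩)
          · simp only [if_neg hj]
            exact ⟨fun hw' => ((himg _ w).mp hw').2, fun hw' => (himg _ w).mpr ⟨hwS, hw'⟩⟩
        exact ⟨j₀, by simp only [hXiff, hYiff]; exact hj₀,
          fun j hj => hj₀u j (by simp only [hXiff j, hYiff j] at hj; exact hj)⟩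

end Paper
end

section
/- If a bipartite graph B admits a complete simple biclique elimination sequence, then every simple biclique elimination sequence of B is complete and has the same length. -/
open SimpleGraph CategoryTheory

namespace Paper

variable {V : Type} {W : Type}

/-! ### Auxiliary development for Statement 15 -/

section Statement15Aux

variable {V₀ : Type} (G : SimpleGraph V₀)

/-- The "closed neighborhood pattern" of an (ordered) pair, as a subset of the
whole vertex type; `closedEdgeNbhdOn G Ws u v = Ws ∩ eS G (u,v)`. -/
def eS (p : V₀ × V₀) : Set V₀ :=
  {w | w = p.1 ∨ w = p.2 ∨ G.Adj p.1 w ∨ G.Adj p.2 w}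

lemma mem_eS {p : V₀ × V₀} {w : V₀} :
    w ∈ eS G p ↔ (w = p.1 ∨ w = p.2 ∨ G.Adj p.1 w ∨ G.Adj p.2 w) := Iff.rfl

lemma eS_symm (u v : V₀) : eS G (u, v) = eS G (v, u) := by
  ext w; simp only [mem_eS]; tauto

lemma closedEdgeNbhdOn_eq_inter (Ws : Set V₀) (u v : V₀) :
    closedEdgeNbhdOn G Ws u v = Ws ∩ eS G (u, v) := rfl

/-- The remaining-vertex sets, starting from an arbitrary base set. -/
def rems (Wb : Set V₀) (e : ℕ → V₀ × V₀) : ℕ → Set V₀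
  | 0 => Wb
  | i + 1 => rems Wb e i \ eS G (e i)

lemma remSet_eq_rems (e : ℕ → V₀ × V₀) : ∀ i, remSet G e i = rems G Set.univ e i
  | 0 => rfl
  | (i + 1) => by
      show remSet G e i \ closedEdgeNbhdOn G (remSet G e i) (e i).1 (e i).2 = _
      rw [remSet_eq_rems e i, closedEdgeNbhdOn_eq_inter]
      show _ = rems G Set.univ e i \ eS G (e i)
      rw [Set.diff_self_inter]

lemma rems_tail (Wb : Set V₀) (e : ℕ → V₀ × V₀) :
    ∀ i, rems G (Wb \ eS G (e 0)) (fun n => e (n + 1)) i = rems G Wb e (i + 1)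
  | 0 => rfl
  | (i + 1) => by
      show rems G (Wb \ eS G (e 0)) (fun n => e (n + 1)) i \ eS G (e (i + 1)) =
        rems G Wb e (i + 1) \ eS G (e (i + 1))
      rw [rems_tail Wb e i]

/-- Prepend a pair to a sequence of pairs. -/
def Pcons (p : V₀ × V₀) (e : ℕ → V₀ × V₀) : ℕ → V₀ × V₀
  | 0 => p
  | n + 1 => e n

lemma rems_cons (Wb : Set V₀) (p : V₀ × V₀) (e : ℕ → V₀ × V₀) :
    ∀ i, rems G Wb (Pcons p e) (i + 1) = rems G (Wb \ eS G p) e i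
  | 0 => rfl
  | (i + 1) => by
      show rems G Wb (Pcons p e) (i + 1) \ eS G (e i) =
        rems G (Wb \ eS G p) e i \ eS G (e i)
      rw [rems_cons Wb p e i]

/-- No isolated vertices in `A` (with respect to the ambient adjacency). -/
def NoIso (A : Set V₀) : Prop := ∀ z ∈ A, ∃ w ∈ A, G.Adj z w

def BESOn (Wb : Set V₀) (k : ℕ) (e : ℕ → V₀ × V₀) : Prop :=
  (∀ i < k, BisimplicialOn G (rems G Wb e i) (e i).1 (e i).2) ∧
  ∀ u ∈ rems G Wb e k, ∀ v ∈ rems G Wb e k, ¬ G.Adj u v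

def SBESOn (Wb : Set V₀) (k : ℕ) (e : ℕ → V₀ × V₀) : Prop :=
  BESOn G Wb k e ∧
  ∀ i < k, SimpleVertexOn G (rems G Wb e i) (e i).1 ∨
    SimpleVertexOn G (rems G Wb e i) (e i).2

def CSBESOn (Wb : Set V₀) (k : ℕ) (e : ℕ → V₀ × V₀) : Prop :=
  SBESOn G Wb k e ∧ ∀ i < k, NoIso G (rems G Wb e (i + 1))

lemma bisimp_swap {Ws : Set V₀} {u v : V₀} (h : BisimplicialOn G Ws u v) :
    BisimplicialOn G Ws v u :=
  ⟨h.2.1, h.1, h.2.2.1.symm,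
    fun a ha b hb h1 h2 h3 h4 => (h.2.2.2 b hb a ha h3 h4 h1 h2).symm⟩

lemma bisimp_mono {Ws Ws' : Set V₀} {u v : V₀} (hsub : Ws' ⊆ Ws)
    (hu : u ∈ Ws') (hv : v ∈ Ws') (h : BisimplicialOn G Ws u v) :
    BisimplicialOn G Ws' u v :=
  ⟨hu, hv, h.2.2.1,
    fun a ha b hb h1 h2 h3 h4 => h.2.2.2 a (hsub ha) b (hsub hb) h1 h2 h3 h4⟩

lemma simple_mono {Ws Ws' : Set V₀} {x : V₀} (hsub : Ws' ⊆ Ws)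
    (hx : x ∈ Ws') (h : SimpleVertexOn G Ws x) : SimpleVertexOn G Ws' x := by
  refine ⟨hx, fun u hu v hv hxu hxv => ?_⟩
  rcases h.2 u (hsub hu) v (hsub hv) hxu hxv with hss | hss
  · exact Or.inl (fun a ha => ⟨ha.1, (hss ⟨hsub ha.1, ha.2⟩).2⟩)
  · exact Or.inr (fun a ha => ⟨ha.1, (hss ⟨hsub ha.1, ha.2⟩).2⟩)

lemma trifree (h2 : G.Colorable 2) :
    ∀ a b c : V₀, G.Adj a b → G.Adj b c → G.Adj a c → False := by
  obtain ⟨C⟩ := h2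
  intro a b c hab hbc hac
  have h1 : (C a).val ≠ (C b).val := fun h => C.valid hab (Fin.ext h)
  have h2' : (C b).val ≠ (C c).val := fun h => C.valid hbc (Fin.ext h)
  have h3 : (C a).val ≠ (C c).val := fun h => C.valid hac (Fin.ext h)
  have v1 : (C a).val < 2 := (C a).isLt
  have v2 : (C b).val < 2 := (C b).isLt
  have v3 : (C c).val < 2 := (C c).isLt
  omega

/-- Two bisimplicial edges sharing an endpoint have the same closed
neighborhood. -/
lemma eq_of_shared (Ws : Set V₀) {x y v : V₀}
    (b1 : BisimplicialOn G Ws x y) (b2 : BisimplicialOn G Ws x v) :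
    Ws ∩ eS G (x, y) = Ws ∩ eS G (x, v) := by
  by_cases hvy : v = y
  · subst hvy; rfl
  have hxy : G.Adj x y := b1.2.2.1
  have hxv : G.Adj x v := b2.2.2.1
  have hvW : v ∈ Ws := b2.2.1
  have hyW : y ∈ Ws := b1.2.1
  have k1 : ∀ b ∈ Ws, G.Adj y b → G.Adj v b := by
    intro b hb hyb
    by_cases hbx : b = x
    · subst hbx; exact hxv.symm
    · exact b1.2.2.2 v hvW b hb hxv hvy hyb hbx
  have k2 : ∀ b ∈ Ws, G.Adj v b → G.Adj y b := by
    intro b hb hvb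
    by_cases hbx : b = x
    · subst hbx; exact hxy.symm
    · exact b2.2.2.2 y hyW b hb hxy (fun h => hvy h.symm) hvb hbx
  ext w
  simp only [Set.mem_inter_iff, mem_eS]
  constructor
  · rintro ⟨hw, (h | h | h | h)⟩
    · exact ⟨hw, Or.inl h⟩
    · exact ⟨hw, Or.inr (Or.inr (Or.inl (by rw [h]; exact hxy)))⟩
    · exact ⟨hw, Or.inr (Or.inr (Or.inl h))⟩
    · exact ⟨hw, Or.inr (Or.inr (Or.inr (k1 w hw h)))⟩
  · rintro ⟨hw, (h | h | h | h)⟩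
    · exact ⟨hw, Or.inl h⟩
    · exact ⟨hw, Or.inr (Or.inr (Or.inl (by rw [h]; exact hxv)))⟩
    · exact ⟨hw, Or.inr (Or.inr (Or.inl h))⟩
    · exact ⟨hw, Or.inr (Or.inr (Or.inr (k2 w hw h)))⟩

/-- Two bisimplicial edges joined by a "double cross" have the same closed
neighborhood. -/
lemma eq_of_cross (Ws : Set V₀) {x y u v : V₀}
    (b1 : BisimplicialOn G Ws x y) (b2 : BisimplicialOn G Ws u v)
    (hxu : G.Adj x u) (hyv : G.Adj y v) (huy : u ≠ y) (hvx : v ≠ x) :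
    Ws ∩ eS G (x, y) = Ws ∩ eS G (u, v) := by
  have huW : u ∈ Ws := b2.1
  have hvW : v ∈ Ws := b2.2.1
  have hxW : x ∈ Ws := b1.1
  have hyW : y ∈ Ws := b1.2.1
  have kA : ∀ b ∈ Ws, G.Adj y b → G.Adj u b := by
    intro b hb h
    by_cases hbx : b = x
    · subst hbx; exact hxu.symm
    · exact b1.2.2.2 u huW b hb hxu huy h hbx
  have kB : ∀ a ∈ Ws, G.Adj x a → G.Adj v a := by
    intro a ha h
    by_cases hay : a = y
    · subst hay; exact hyv.symm
    · exact (b1.2.2.2 a ha v hvW h hay hyv hvx).symm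
  have kC : ∀ b ∈ Ws, G.Adj v b → G.Adj x b := by
    intro b hb h
    by_cases hbu : b = u
    · subst hbu; exact hxu
    · exact b2.2.2.2 x hxW b hb hxu.symm (fun hh => hvx hh.symm) h hbu
  have kD : ∀ a ∈ Ws, G.Adj u a → G.Adj y a := by
    intro a ha h
    by_cases hav : a = v
    · subst hav; exact hyv
    · exact (b2.2.2.2 a ha y hyW h hav hyv.symm (fun hh => huy hh.symm)).symm
  ext w
  simp only [Set.mem_inter_iff, mem_eS]
  constructor
  · rintro ⟨hw, (h | h | h | h)⟩
    · exact ⟨hw, Or.inr (Or.inr (Or.inl (by rw [h]; exact hxu.symm)))⟩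
    · exact ⟨hw, Or.inr (Or.inr (Or.inr (by rw [h]; exact hyv.symm)))⟩
    · exact ⟨hw, Or.inr (Or.inr (Or.inr (kB w hw h)))⟩
    · exact ⟨hw, Or.inr (Or.inr (Or.inl (kA w hw h)))⟩
  · rintro ⟨hw, (h | h | h | h)⟩
    · exact ⟨hw, Or.inr (Or.inr (Or.inl (by rw [h]; exact hxu)))⟩
    · exact ⟨hw, Or.inr (Or.inr (Or.inr (by rw [h]; exact hyv)))⟩
    · exact ⟨hw, Or.inr (Or.inr (Or.inr (kD w hw h)))⟩
    · exact ⟨hw, Or.inr (Or.inr (Or.inl (kC w hw h)))⟩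

/-- The impossible "single cross" configuration: it would leave `v` isolated
after deleting the closed neighborhood of `xy`. -/
lemma no_cross_false (Ws : Set V₀) {x y u v : V₀} (hxW : x ∈ Ws)
    (b2 : BisimplicialOn G Ws u v)
    (comp : NoIso G (Ws \ eS G (x, y)))
    (hxu : G.Adj x u) (hnxv : ¬ G.Adj x v) (hnyv : ¬ G.Adj y v)
    (hvx : v ≠ x) (hvy : v ≠ y) : False := by
  have hvW : v ∈ Ws := b2.2.1
  have hvS : v ∉ eS G (x, y) := by
    rw [mem_eS]
    rintro (h | h | h | h)
    exacts [hvx h, hvy h, hnxv h, hnyv h]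
  obtain ⟨w, hw, hadj⟩ := comp v ⟨hvW, hvS⟩
  apply hw.2
  rw [mem_eS]
  by_cases hbu : w = u
  · exact Or.inr (Or.inr (Or.inl (by rw [hbu]; exact hxu)))
  · exact Or.inr (Or.inr (Or.inl
      (b2.2.2.2 x hxW w hw.1 hxu.symm (fun hh => hvx hh.symm) hadj hbu)))

lemma star_adj (Ws : Set V₀) {x y u v : V₀}
    (tri : ∀ a b c : V₀, G.Adj a b → G.Adj b c → G.Adj a c → False)
    (b1 : BisimplicialOn G Ws x y) (b2 : BisimplicialOn G Ws u v)
    (comp : NoIso G (Ws \ eS G (x, y)))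
    (hxu : G.Adj x u) (huy : u ≠ y) :
    Ws ∩ eS G (x, y) = Ws ∩ eS G (u, v) := by
  by_cases hvx : v = x
  · subst hvx
    rw [eS_symm G u v]
    exact eq_of_shared G Ws b1 (bisimp_swap G b2)
  by_cases hvy : v = y
  · subst hvy
    rw [eS_symm G x v, eS_symm G u v]
    exact eq_of_shared G Ws (bisimp_swap G b1) (bisimp_swap G b2)
  by_cases hyv : G.Adj y v
  · exact eq_of_cross G Ws b1 b2 hxu hyv huy hvx
  · exfalso
    have hnxv : ¬ G.Adj x v := fun h => tri x u v hxu b2.2.2.1 h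
    exact no_cross_false G Ws b1.1 b2 comp hxu hnxv hyv hvx hvy

lemma star1 (Ws : Set V₀) {x y u v : V₀}
    (tri : ∀ a b c : V₀, G.Adj a b → G.Adj b c → G.Adj a c → False)
    (b1 : BisimplicialOn G Ws x y) (b2 : BisimplicialOn G Ws u v)
    (comp : NoIso G (Ws \ eS G (x, y)))
    (hu : u ∈ eS G (x, y)) :
    Ws ∩ eS G (x, y) = Ws ∩ eS G (u, v) := by
  by_cases hux : u = x
  · subst hux; exact eq_of_shared G Ws b1 b2
  by_cases huy : u = y
  · subst huy
    rw [eS_symm G x u]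
    exact eq_of_shared G Ws (bisimp_swap G b1) b2
  rcases (mem_eS G).mp hu with h | h | h | h
  · exact absurd h hux
  · exact absurd h huy
  · exact star_adj G Ws tri b1 b2 comp h huy
  · have comp' : NoIso G (Ws \ eS G (y, x)) := by
      rw [eS_symm G y x]; exact comp
    have := star_adj G Ws tri (bisimp_swap G b1) b2 comp' h hux
    rw [eS_symm G x y]
    exact this

lemma star (Ws : Set V₀) {x y u v : V₀}
    (tri : ∀ a b c : V₀, G.Adj a b → G.Adj b c → G.Adj a c → False)
    (b1 : BisimplicialOn G Ws x y) (b2 : BisimplicialOn G Ws u v)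
    (comp : NoIso G (Ws \ eS G (x, y)))
    (hint : u ∈ eS G (x, y) ∨ v ∈ eS G (x, y)) :
    Ws ∩ eS G (x, y) = Ws ∩ eS G (u, v) := by
  rcases hint with h | h
  · exact star1 G Ws tri b1 b2 comp h
  · rw [eS_symm G u v]
    exact star1 G Ws tri b1 (bisimp_swap G b2) comp h

lemma tailSBES {Wb : Set V₀} {e : ℕ → V₀ × V₀} {l : ℕ}
    (h : SBESOn G Wb (l + 1) e) :
    SBESOn G (Wb \ eS G (e 0)) l (fun n => e (n + 1)) := by
  refine ⟨⟨fun i hi => ?_, fun u hu v hv => ?_⟩, fun i hi => ?_⟩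
  · rw [rems_tail]; exact h.1.1 (i + 1) (by omega)
  · rw [rems_tail] at hu hv; exact h.1.2 u hu v hv
  · rw [rems_tail]; exact h.2 (i + 1) (by omega)

lemma tailCSBES {Wb : Set V₀} {e : ℕ → V₀ × V₀} {l : ℕ}
    (h : CSBESOn G Wb (l + 1) e) :
    CSBESOn G (Wb \ eS G (e 0)) l (fun n => e (n + 1)) := by
  refine ⟨tailSBES G h.1, fun i hi => ?_⟩
  rw [rems_tail]
  exact h.2 (i + 1) (by omega)

lemma consCSBES {Wb : Set V₀} {p : V₀ × V₀} {l : ℕ} {e : ℕ → V₀ × V₀}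
    (hb : BisimplicialOn G Wb p.1 p.2)
    (hs : SimpleVertexOn G Wb p.1 ∨ SimpleVertexOn G Wb p.2)
    (hni : NoIso G (Wb \ eS G p))
    (h : CSBESOn G (Wb \ eS G p) l e) :
    CSBESOn G Wb (l + 1) (Pcons p e) := by
  refine ⟨⟨⟨fun i hi => ?_, fun u hu v hv => ?_⟩, fun i hi => ?_⟩, fun i hi => ?_⟩
  · cases i with
    | zero => exact hb
    | succ j => rw [rems_cons]; exact h.1.1.1 j (by omega)
  · rw [rems_cons] at hu hv
    exact h.1.1.2 u hu v hv
  · cases i with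
    | zero => exact hs
    | succ j => rw [rems_cons]; exact h.1.2 j (by omega)
  · cases i with
    | zero => rw [rems_cons]; exact hni
    | succ j => rw [rems_cons]; exact h.2 j (by omega)

/-- Key exchange lemma: if a set admits a complete simple BES of length `k`,
then deleting the closed neighborhood of ANY bisimplicial edge with a simple
endpoint leaves no isolated vertex, and the rest admits a complete simple BES
of length `k - 1`. -/
lemma lemA (tri : ∀ a b c : V₀, G.Adj a b → G.Adj b c → G.Adj a c → False) :
    ∀ (k : ℕ) (Wb : Set V₀) (e : ℕ → V₀ × V₀) (u v : V₀),
      CSBESOn G Wb k e → BisimplicialOn G Wb u v →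
      (SimpleVertexOn G Wb u ∨ SimpleVertexOn G Wb v) →
      NoIso G (Wb \ eS G (u, v)) ∧
        ∃ m e', k = m + 1 ∧ CSBESOn G (Wb \ eS G (u, v)) m e' := by
  intro k
  induction k with
  | zero =>
      intro Wb e u v hσ hb _
      exact absurd hb.2.2.1 (hσ.1.1.2 u hb.1 v hb.2.1)
  | succ m IH =>
      intro Wb e u v hσ hb hs
      have hb0 : BisimplicialOn G Wb (e 0).1 (e 0).2 := hσ.1.1.1 0 (Nat.succ_pos m)
      have hs0 : SimpleVertexOn G Wb (e 0).1 ∨ SimpleVertexOn G Wb (e 0).2 :=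
        hσ.1.2 0 (Nat.succ_pos m)
      have comp0 : NoIso G (Wb \ eS G (e 0)) := hσ.2 0 (Nat.succ_pos m)
      have htail : CSBESOn G (Wb \ eS G (e 0)) m (fun n => e (n + 1)) :=
        tailCSBES G hσ
      by_cases hint : u ∈ eS G (e 0) ∨ v ∈ eS G (e 0)
      · have heq : Wb ∩ eS G (e 0) = Wb ∩ eS G (u, v) :=
          star G Wb tri hb0 hb comp0 hint
        have hdiff : Wb \ eS G (u, v) = Wb \ eS G (e 0) := by
          ext w
          constructor
          · rintro ⟨hw, hn⟩
            refine ⟨hw, fun hm => hn ?_⟩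
            have h1 : w ∈ Wb ∩ eS G (e 0) := ⟨hw, hm⟩
            rw [heq] at h1
            exact h1.2
          · rintro ⟨hw, hn⟩
            refine ⟨hw, fun hm => hn ?_⟩
            have h1 : w ∈ Wb ∩ eS G (u, v) := ⟨hw, hm⟩
            rw [← heq] at h1
            exact h1.2
        rw [hdiff]
        exact ⟨comp0, m, fun n => e (n + 1), rfl, htail⟩
      · push_neg at hint
        obtain ⟨hu0, hv0⟩ := hint
        have hxS : (e 0).1 ∉ eS G (u, v) := by
          rw [mem_eS]
          rintro (h | h | h | h)
          · exact hu0 (Or.inl h.symm)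
          · exact hv0 (Or.inl h.symm)
          · exact hu0 (Or.inr (Or.inr (Or.inl h.symm)))
          · exact hv0 (Or.inr (Or.inr (Or.inl h.symm)))
        have hyS : (e 0).2 ∉ eS G (u, v) := by
          rw [mem_eS]
          rintro (h | h | h | h)
          · exact hu0 (Or.inr (Or.inl h.symm))
          · exact hv0 (Or.inr (Or.inl h.symm))
          · exact hu0 (Or.inr (Or.inr (Or.inr h.symm)))
          · exact hv0 (Or.inr (Or.inr (Or.inr h.symm)))
        have hu1 : u ∈ Wb \ eS G (e 0) := ⟨hb.1, hu0⟩
        have hv1 : v ∈ Wb \ eS G (e 0) := ⟨hb.2.1, hv0⟩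
        have hb' : BisimplicialOn G (Wb \ eS G (e 0)) u v :=
          bisimp_mono G Set.diff_subset hu1 hv1 hb
        have hs' : SimpleVertexOn G (Wb \ eS G (e 0)) u ∨
            SimpleVertexOn G (Wb \ eS G (e 0)) v :=
          hs.imp (simple_mono G Set.diff_subset hu1) (simple_mono G Set.diff_subset hv1)
        obtain ⟨hniA, m', e'', hm, hcs⟩ :=
          IH (Wb \ eS G (e 0)) (fun n => e (n + 1)) u v htail hb' hs'
        have hcomm : (Wb \ eS G (e 0)) \ eS G (u, v) =
            (Wb \ eS G (u, v)) \ eS G (e 0) := Set.diff_diff_comm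
        constructor
        · intro z hz
          by_cases hz0 : z ∈ eS G (e 0)
          · rcases (mem_eS G).mp hz0 with h | h | h | h
            · exact ⟨(e 0).2, ⟨hb0.2.1, hyS⟩, by rw [h]; exact hb0.2.2.1⟩
            · exact ⟨(e 0).1, ⟨hb0.1, hxS⟩, by rw [h]; exact hb0.2.2.1.symm⟩
            · exact ⟨(e 0).1, ⟨hb0.1, hxS⟩, h.symm⟩
            · exact ⟨(e 0).2, ⟨hb0.2.1, hyS⟩, h.symm⟩
          · obtain ⟨w, hw, hadj⟩ := hniA z ⟨⟨hz.1, hz0⟩, hz.2⟩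
            exact ⟨w, ⟨hw.1.1, hw.2⟩, hadj⟩
        · refine ⟨m' + 1, Pcons (e 0) e'', by omega, ?_⟩
          apply consCSBES
          · exact bisimp_mono G Set.diff_subset ⟨hb0.1, hxS⟩ ⟨hb0.2.1, hyS⟩ hb0
          · exact hs0.imp (simple_mono G Set.diff_subset ⟨hb0.1, hxS⟩)
              (simple_mono G Set.diff_subset ⟨hb0.2.1, hyS⟩)
          · rw [← hcomm]; exact hniA
          · rw [← hcomm]; exact hcs

lemma master (tri : ∀ a b c : V₀, G.Adj a b → G.Adj b c → G.Adj a c → False) :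
    ∀ (k : ℕ) (Wb : Set V₀) (e : ℕ → V₀ × V₀), CSBESOn G Wb k e →
      ∀ (l : ℕ) (f : ℕ → V₀ × V₀), SBESOn G Wb l f →
        CSBESOn G Wb l f ∧ l = k := by
  intro k
  induction k with
  | zero =>
      intro Wb e hσ l f hτ
      have hl : l = 0 := by
        by_contra hne
        have hb := hτ.1.1 0 (Nat.pos_of_ne_zero hne)
        exact hσ.1.1.2 _ hb.1 _ hb.2.1 hb.2.2.1
      subst hl
      exact ⟨⟨hτ, fun i hi => absurd hi (Nat.not_lt_zero i)⟩, rfl⟩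
  | succ m IH =>
      intro Wb e hσ l f hτ
      have hb0σ : BisimplicialOn G Wb (e 0).1 (e 0).2 := hσ.1.1.1 0 (Nat.succ_pos m)
      rcases l with _ | j
      · exact absurd hb0σ.2.2.1 (hτ.1.2 _ hb0σ.1 _ hb0σ.2.1)
      · have hbf : BisimplicialOn G Wb (f 0).1 (f 0).2 := hτ.1.1 0 (Nat.succ_pos j)
        have hsf := hτ.2 0 (Nat.succ_pos j)
        obtain ⟨hni, m₂, e', hk, hcs⟩ :=
          lemA G tri (m + 1) Wb e (f 0).1 (f 0).2 hσ hbf hsf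
        have hm₂ : m₂ = m := by omega
        subst hm₂
        have hτ' : SBESOn G (Wb \ eS G (f 0)) j (fun n => f (n + 1)) := tailSBES G hτ
        obtain ⟨hc', hj⟩ := IH (Wb \ eS G (f 0)) e' hcs j (fun n => f (n + 1)) hτ'
        refine ⟨⟨hτ, fun i hi => ?_⟩, by omega⟩
        cases i with
        | zero => exact hni
        | succ i' =>
            have hstep := hc'.2 i' (by omega)
            rw [rems_tail] at hstep
            exact hstep

end Statement15Aux

/-- if `B` admits a complete simple biclique elimination
sequence, then every simple biclique elimination sequence of `B` is complete
and has the same length. -/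
theorem simpleBES_complete_and_length_eq {V : Type} [Fintype V]
    (B : SimpleGraph V) (hbip : B.Colorable 2) (k : ℕ) (e : ℕ → V × V)
    (h : IsCompleteSBES B k e) (l : ℕ) (f : ℕ → V × V)
    (hf : IsSimpleBES B l f) :
    IsCompleteSBES B l f ∧ l = k := by
  have tri := trifree B hbip
  have hre : ∀ g : ℕ → V × V, remSet B g = rems B Set.univ g :=
    fun g => funext (remSet_eq_rems B g)
  have hσ : CSBESOn B Set.univ k e := by
    unfold IsCompleteSBES IsSimpleBES IsBES at h
    rw [hre e] at h
    exact h
  have hτ : SBESOn B Set.univ l f := by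
    unfold IsSimpleBES IsBES at hf
    rw [hre f] at hf
    exact hf
  obtain ⟨hcf, hlk⟩ := master B tri k Set.univ e hσ l f hτ
  refine ⟨?_, hlk⟩
  unfold IsCompleteSBES IsSimpleBES IsBES
  rw [hre f]
  exact hcf

end Paper
end

section
/- If u and v are vertices of a graph G with N(u) ⊆ N(v), then the independence complexes Ind(G) and Ind(G − v) are homotopy equivalent. -/
open SimpleGraph CategoryTheory

namespace Paper

variable {V : Type} {W : Type}

noncomputable section Aux17

open scoped Classical

variable {V : Type} [Fintype V]

/-- Push the weight at `v` onto `u`. -/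
def pushMap (u v : V) (f : V → ℝ) : V → ℝ := fun w =>
  if w = v then 0 else if w = u then f u + f v else f w

lemma pushMap_sum (u v : V) (hne : u ≠ v) (f : V → ℝ) :
    ∑ᶠ w, pushMap u v f w = ∑ᶠ w, f w := by
  classical
  rw [finsum_eq_sum_of_fintype, finsum_eq_sum_of_fintype]
  rw [← Finset.add_sum_erase _ (pushMap u v f) (Finset.mem_univ v),
    ← Finset.add_sum_erase _ f (Finset.mem_univ v)]
  have hu : u ∈ Finset.univ.erase v := Finset.mem_erase.2 ⟨hne, Finset.mem_univ u⟩
  rw [← Finset.add_sum_erase _ (pushMap u v f) hu, ← Finset.add_sum_erase _ f hu]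
  have hcong : ∑ w ∈ (Finset.univ.erase v).erase u, pushMap u v f w
      = ∑ w ∈ (Finset.univ.erase v).erase u, f w := by
    refine Finset.sum_congr rfl fun w hw => ?_
    have hwu : w ≠ u := (Finset.mem_erase.1 hw).1
    have hwv : w ≠ v := (Finset.mem_erase.1 (Finset.mem_erase.1 hw).2).1
    simp [pushMap, hwu, hwv]
  rw [hcong]
  have h1 : pushMap u v f v = 0 := by simp [pushMap]
  have h2 : pushMap u v f u = f u + f v := by simp [pushMap, hne]
  rw [h1, h2]; ring

lemma sum_subtype_ne (v : V) (g : ({w : V | w ≠ v} : Set V) → ℝ) :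
    ∑ᶠ w : ({w : V | w ≠ v} : Set V), g w
      = ∑ᶠ w, (fun w : V => if h : w = v then 0 else g ⟨w, h⟩) w := by
  classical
  rw [finsum_eq_sum_of_fintype, finsum_eq_sum_of_fintype]
  set ext : V → ℝ := fun w : V => if h : w = v then 0 else g ⟨w, h⟩ with hext
  calc ∑ i : ({w : V | w ≠ v} : Set V), g i
      = ∑ i : ({w : V | w ≠ v} : Set V), ext i.1 := by
        refine Finset.sum_congr rfl fun i _ => ?_
        have hi : (i : V) ≠ v := i.2
        simp [hext, hi]
    _ = ∑ w ∈ Finset.univ.erase v, ext w := by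
        exact (Finset.sum_subtype (Finset.univ.erase v) (fun x => by simp) ext).symm
    _ = ∑ w : V, ext w := Finset.sum_erase _ (by simp [hext])

lemma master_ind (G : SimpleGraph V) (u v : V)
    (h : G.neighborSet u ⊆ G.neighborSet v)
    (f : V → ℝ) (hind : ∀ a b, f a ≠ 0 → f b ≠ 0 → ¬ G.Adj a b) :
    ∀ a b : V, (f a ≠ 0 ∨ (a = u ∧ f v ≠ 0)) →
      (f b ≠ 0 ∨ (b = u ∧ f v ≠ 0)) → ¬ G.Adj a b := by
  rintro a b (hfa | ⟨hau, hfv⟩) (hfb | ⟨hbu, hfv'⟩) hadj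
  · exact hind a b hfa hfb hadj
  · subst hbu
    have hav : a ∈ G.neighborSet v := h (G.adj_symm hadj)
    exact hind a v hfa hfv' (G.adj_symm hav)
  · subst hau
    have hbv : b ∈ G.neighborSet v := h hadj
    exact hind b v hfb hfv (G.adj_symm hbv)
  · rw [hau, hbu] at hadj; exact G.loopless.irrefl u hadj

lemma pushMap_ne_zero {u v : V} {f : V → ℝ} {w : V}
    (hw : pushMap u v f w ≠ 0) : f w ≠ 0 ∨ (w = u ∧ f v ≠ 0) := by
  unfold pushMap at hw
  split_ifs at hw with h1 h2
  · exact absurd rfl hw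
  · by_cases hfu : f u = 0
    · by_cases hfv : f v = 0
      · exact absurd (by rw [hfu, hfv, add_zero]) hw
      · exact Or.inr ⟨h2, hfv⟩
    · exact Or.inl (h2 ▸ hfu)
  · exact Or.inl hw

variable (G : SimpleGraph V) (u v : V)

/-- The pushed point of the realization. -/
def pushPoint (hne : u ≠ v) (h : G.neighborSet u ⊆ G.neighborSet v)
    (x : indRealization G) : indRealization (G.induce {w | w ≠ v}) := by
  refine ⟨fun w => pushMap u v x.1 w.1, ?_, ?_, ?_⟩
  · intro w
    show 0 ≤ pushMap u v x.1 w.1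
    unfold pushMap
    split_ifs
    · exact le_refl 0
    · exact add_nonneg (x.2.1 u) (x.2.1 v)
    · exact x.2.1 _
  · have h1 := sum_subtype_ne v (fun w : ({w : V | w ≠ v} : Set V) => pushMap u v x.1 w.1)
    have h2 : (fun w : V => if hw : w = v then 0 else pushMap u v x.1 w)
        = pushMap u v x.1 := by
      funext w
      by_cases hw : w = v
      · simp [hw, pushMap]
      · simp [hw]
    rw [h1, h2, pushMap_sum u v hne, x.2.2.1]
  · intro a b ha hb hadj
    rw [SimpleGraph.comap_adj] at hadj
    exact master_ind G u v h x.1 x.2.2.2 a.1 b.1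
      (pushMap_ne_zero ha) (pushMap_ne_zero hb) hadj

/-- Extension by zero of a point of the realization of the deleted graph. -/
def extPoint (y : indRealization (G.induce {w | w ≠ v})) : indRealization G := by
  refine ⟨fun w => if hw : w = v then 0 else y.1 ⟨w, hw⟩, ?_, ?_, ?_⟩
  · intro w
    by_cases hw : w = v
    · simp [hw]
    · simpa [hw] using y.2.1 ⟨w, hw⟩
  · rw [← sum_subtype_ne v y.1]
    exact y.2.2.1
  · intro a b ha hb hadj
    by_cases hav : a = v
    · simp [hav] at ha
    by_cases hbv : b = v
    · simp [hbv] at hb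
    simp only [dif_neg hav] at ha
    simp only [dif_neg hbv] at hb
    exact y.2.2.2 ⟨a, hav⟩ ⟨b, hbv⟩ ha hb (by rwa [SimpleGraph.comap_adj])

lemma extPoint_apply (y : indRealization (G.induce {w | w ≠ v})) (w : V) :
    (extPoint G v y).1 w = if hw : w = v then 0 else y.1 ⟨w, hw⟩ := rfl

/-- The push map as a continuous map. -/
def pushCont (hne : u ≠ v) (h : G.neighborSet u ⊆ G.neighborSet v) :
    C(indRealization G, indRealization (G.induce {w | w ≠ v})) := by
  refine ⟨pushPoint G u v hne h, ?_⟩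
  apply Continuous.subtype_mk
  apply continuous_pi
  intro w
  show Continuous fun x : indRealization G => pushMap u v x.1 w.1
  unfold pushMap
  split_ifs
  · exact continuous_const
  · exact ((continuous_apply u).comp continuous_subtype_val).add
      ((continuous_apply v).comp continuous_subtype_val)
  · exact (continuous_apply (w : V)).comp continuous_subtype_val

/-- The extension map as a continuous map. -/
def extCont : C(indRealization (G.induce {w | w ≠ v}), indRealization G) := by
  refine ⟨extPoint G v, ?_⟩
  apply Continuous.subtype_mk
  apply continuous_pi
  intro w
  show Continuous fun y : indRealization (G.induce {w | w ≠ v}) =>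
    if hw : w = v then (0 : ℝ) else y.1 ⟨w, hw⟩
  by_cases hw : w = v
  · simp only [dif_pos hw]; exact continuous_const
  · simp only [dif_neg hw]
    exact (continuous_apply _).comp continuous_subtype_val

lemma push_ext (hne : u ≠ v) (h : G.neighborSet u ⊆ G.neighborSet v) :
    (pushCont G u v hne h).comp (extCont G v) = ContinuousMap.id _ := by
  ext y
  refine Subtype.ext (funext fun w => ?_)
  show pushMap u v (extPoint G v y).1 w.1 = y.1 w
  have hwv : (w : V) ≠ v := w.2
  by_cases hwu : (w : V) = u
  · have : w = (⟨u, hwu ▸ w.2⟩ : ({w : V | w ≠ v} : Set V)) := Subtype.ext hwu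
    rw [this]
    simp [pushMap, hne, extPoint_apply]
  · simp only [pushMap, if_neg hwv, if_neg hwu, extPoint_apply, dif_neg hwv]

/-- The straight-line homotopy between `ext ∘ push` and the identity. -/
def theHomotopy (hne : u ≠ v) (h : G.neighborSet u ⊆ G.neighborSet v) :
    ((extCont G v).comp (pushCont G u v hne h)).Homotopy
      (ContinuousMap.id (indRealization G)) := by
  have qdef : ∀ x : indRealization G,
      ((extCont G v).comp (pushCont G u v hne h) x).1
        = fun w : V => if hw : w = v then 0 else pushMap u v x.1 w := fun x => rfl
  have qpos : ∀ (x : indRealization G) (w : V),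
      0 ≤ (if hw : w = v then 0 else pushMap u v x.1 w) := by
    intro x w
    by_cases hw : w = v
    · simp [hw]
    · rw [dif_neg hw]
      unfold pushMap
      split_ifs
      · exact add_nonneg (x.2.1 u) (x.2.1 v)
      · exact x.2.1 _
  have qsum : ∀ x : indRealization G,
      ∑ᶠ w, (if hw : w = v then (0:ℝ) else pushMap u v x.1 w) = 1 := by
    intro x
    have h2 : (fun w : V => if hw : w = v then 0 else pushMap u v x.1 w)
        = pushMap u v x.1 := by
      funext w
      by_cases hw : w = v
      · simp [hw, pushMap]
      · simp [hw]
    rw [h2, pushMap_sum u v hne, x.2.2.1]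
  refine
  { toContinuousMap := ⟨fun p => ⟨fun w =>
      (1 - (p.1 : ℝ)) * (if hw : w = v then 0 else pushMap u v p.2.1 w)
        + (p.1 : ℝ) * p.2.1 w, ?_, ?_, ?_⟩, ?_⟩
    map_zero_left := ?_
    map_one_left := ?_ }
  · intro w
    have ht1 : (p.1 : ℝ) ≤ 1 := p.1.2.2
    exact add_nonneg (mul_nonneg (by linarith) (qpos p.2 w))
      (mul_nonneg p.1.2.1 (p.2.2.1 w))
  · rw [finsum_eq_sum_of_fintype, Finset.sum_add_distrib, ← Finset.mul_sum, ← Finset.mul_sum,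
      ← finsum_eq_sum_of_fintype, ← finsum_eq_sum_of_fintype, qsum p.2, p.2.2.2.1]
    ring
  · intro a b ha hb hadj
    have key : ∀ c : V,
        (1 - (p.1 : ℝ)) * (if hw : c = v then 0 else pushMap u v p.2.1 c)
          + (p.1 : ℝ) * p.2.1 c ≠ 0 →
        (p.2.1 c ≠ 0 ∨ (c = u ∧ p.2.1 v ≠ 0)) := by
      intro c hc
      have hq : (if hw : c = v then (0:ℝ) else pushMap u v p.2.1 c) ≠ 0 ∨ p.2.1 c ≠ 0 := by
        by_contra hcon
        push_neg at hcon
        rw [hcon.1, hcon.2, mul_zero, mul_zero, add_zero] at hc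
        exact hc rfl
      rcases hq with hq | hq
      · by_cases hcv : c = v
        · rw [dif_pos hcv] at hq; exact absurd rfl hq
        · rw [dif_neg hcv] at hq
          exact pushMap_ne_zero hq
      · exact Or.inl hq
    exact master_ind G u v h p.2.1 p.2.2.2.2 a b (key a ha) (key b hb) hadj
  · -- continuity
    apply Continuous.subtype_mk
    apply continuous_pi
    intro w
    have hT : Continuous fun p : unitInterval × indRealization G => (p.1 : ℝ) :=
      continuous_subtype_val.comp continuous_fst
    have hE : ∀ c : V, Continuous fun p : unitInterval × indRealization G => p.2.1 c :=
      fun c => (continuous_apply c).comp (continuous_subtype_val.comp continuous_snd)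
    by_cases hw : w = v
    · simp only [dif_pos hw]
      exact ((continuous_const.sub hT).mul continuous_const).add (hT.mul (hE w))
    · simp only [dif_neg hw]
      unfold pushMap
      split_ifs
      · exact ((continuous_const.sub hT).mul ((hE u).add (hE v))).add (hT.mul (hE w))
      · exact ((continuous_const.sub hT).mul (hE w)).add (hT.mul (hE w))
  · intro x
    refine Subtype.ext (funext fun w => ?_)
    show (1 - ((0:unitInterval) : ℝ)) * (if hw : w = v then 0 else pushMap u v x.1 w)
        + ((0:unitInterval) : ℝ) * x.1 w
      = if hw : w = v then 0 else pushMap u v x.1 w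
    simp
  · intro x
    refine Subtype.ext (funext fun w => ?_)
    show (1 - ((1:unitInterval) : ℝ)) * (if hw : w = v then 0 else pushMap u v x.1 w)
        + ((1:unitInterval) : ℝ) * x.1 w = x.1 w
    simp

end Aux17

/-- if `N(u) ⊆ N(v)` then `Ind(G)` and `Ind(G - v)` are
homotopy equivalent. -/
theorem ind_homotopyEquiv_deleteVertex_of_neighborSet_subset {V : Type}
    [Fintype V] (G : SimpleGraph V) (u v : V) (hne : u ≠ v)
    (h : G.neighborSet u ⊆ G.neighborSet v) :
    Nonempty (ContinuousMap.HomotopyEquiv (indRealization G)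
      (indRealization (G.induce {w | w ≠ v}))) := by
  classical
  exact ⟨{
    toFun := pushCont G u v hne h
    invFun := extCont G v
    left_inv := ⟨theHomotopy G u v hne h⟩
    right_inv := (push_ext G u v hne h) ▸ ⟨ContinuousMap.Homotopy.refl _⟩ }⟩

end Paper
end

section
/- Every graph from the class Γ contains the long claw S_{2,2,2} (the 1-subdivision of K_{1,3}) as an induced subgraph. -/
open SimpleGraph CategoryTheory

namespace Paper

variable {V : Type} {W : Type}

/-- Triangle-free from 2-colorable. -/
lemma tri_free {G : SimpleGraph V} (h : G.Colorable 2) {x y z : V}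
    (hxy : G.Adj x y) (hyz : G.Adj y z) : ¬ G.Adj x z := by
  obtain ⟨c⟩ := h
  intro hxz
  have h1 : c x ≠ c y := c.valid hxy
  have h2 : c y ≠ c z := c.valid hyz
  have h3 : c x ≠ c z := c.valid hxz
  have := (c x).isLt; have := (c y).isLt; have := (c z).isLt
  rw [Fin.ne_iff_vne] at h1 h2 h3
  omega

lemma cbg_edge_form : ∀ x y : Fin 1 ⊕ Fin 3, (completeBipartiteGraph (Fin 1) (Fin 3)).Adj x y →
    ∃ j : Fin 3, s(x, y) = s(Sum.inl (0:Fin 1), Sum.inr j) := by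
  rintro (a | a) (b | b) h <;> simp_all [completeBipartiteGraph] <;>
    exact Subsingleton.elim _ _

/-- Building an embedding of the long claw from the 7-vertex configuration. -/
lemma claw_embed (G : SimpleGraph V) (u : V) (m l : Fin 3 → V)
    (hum : ∀ j, G.Adj u (m j)) (hml : ∀ j, G.Adj (m j) (l j))
    (hul : ∀ j, ¬ G.Adj u (l j))
    (hmm : ∀ j j', j ≠ j' → ¬ G.Adj (m j) (m j'))
    (hll : ∀ j j', j ≠ j' → ¬ G.Adj (l j) (l j'))
    (hmlne : ∀ j j', j ≠ j' → ¬ G.Adj (m j) (l j'))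
    (hu_m : ∀ j, u ≠ m j) (hu_l : ∀ j, u ≠ l j)
    (hm_inj : Function.Injective m) (hl_inj : Function.Injective l)
    (hm_l : ∀ j j', m j ≠ l j') :
    Nonempty (subdiv (completeBipartiteGraph (Fin 1) (Fin 3)) ↪g G) := by
  classical
  set H := completeBipartiteGraph (Fin 1) (Fin 3) with hH
  -- index of an edge of H
  have eform : ∀ ε : H.edgeSet, ∃ j : Fin 3, (ε : Sym2 _) = s(Sum.inl (0:Fin 1), Sum.inr j) := by
    rintro ⟨ε, hε⟩
    induction ε using Sym2.ind with
    | _ x y => exact cbg_edge_form x y hε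
  choose idx hidx using eform
  have idx_inj : Function.Injective idx := by
    intro ε ε' h
    have := hidx ε
    have h2 := hidx ε'
    apply Subtype.ext
    rw [this, h2, h]
  -- the map
  let f : (Fin 1 ⊕ Fin 3) ⊕ H.edgeSet → V := fun x =>
    match x with
    | Sum.inl (Sum.inl _) => u
    | Sum.inl (Sum.inr j) => l j
    | Sum.inr ε => m (idx ε)
  have finj : Function.Injective f := by
    rintro (a | ε) (b | ε') h
    · match a, b with
      | Sum.inl a, Sum.inl b => simp [Subsingleton.elim a b]
      | Sum.inl a, Sum.inr j => exact absurd h (hu_l j)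
      | Sum.inr j, Sum.inl b => exact absurd h.symm (hu_l j)
      | Sum.inr j, Sum.inr j' => simp [hl_inj h]
    · match a with
      | Sum.inl a => exact absurd h.symm (fun hh => hu_m _ hh.symm)
      | Sum.inr j => exact absurd h.symm (hm_l _ j)
    · match b with
      | Sum.inl b => exact absurd h (fun hh => hu_m _ hh.symm)
      | Sum.inr j => exact absurd h (hm_l _ j)
    · simp only [Sum.inr.injEq]
      exact idx_inj (hm_inj h)
  refine ⟨⟨⟨f, finj⟩, ?_⟩⟩
  rintro (a | ε) (b | ε')
  · -- both original vertices: subdiv adj is False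
    show G.Adj (f (Sum.inl a)) (f (Sum.inl b)) ↔ False
    simp only [iff_false]
    match a, b with
    | Sum.inl a, Sum.inl b => simp [f]
    | Sum.inl a, Sum.inr j => exact hul j
    | Sum.inr j, Sum.inl b => exact fun hh => hul j hh.symm
    | Sum.inr j, Sum.inr j' =>
        by_cases hjj : j = j'
        · subst hjj; simp [f]
        · exact hll j j' hjj
  · show G.Adj (f (Sum.inl a)) (f (Sum.inr ε')) ↔ (a ∈ (ε' : Sym2 _))
    have hq := hidx ε'
    match a with
    | Sum.inl a =>
        have : (Sum.inl a : Fin 1 ⊕ Fin 3) ∈ (ε' : Sym2 _) := by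
          rw [hq]; simp [Subsingleton.elim a 0]
        simpa [this] using hum (idx ε')
    | Sum.inr j =>
        constructor
        · intro hadj
          by_contra hmem
          have hne : j ≠ idx ε' := by
            intro hh; apply hmem; rw [hq, hh]; simp
          exact hmlne (idx ε') j (Ne.symm hne) hadj.symm
        · intro hmem
          rw [hq] at hmem
          simp only [Sym2.mem_iff, Sum.inr.injEq, reduceCtorEq, false_or] at hmem
          rw [hmem]
          exact (hml (idx ε')).symm
  · show G.Adj (f (Sum.inr ε)) (f (Sum.inl b)) ↔ (b ∈ (ε : Sym2 _))
    have hq := hidx ε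
    match b with
    | Sum.inl b =>
        have : (Sum.inl b : Fin 1 ⊕ Fin 3) ∈ (ε : Sym2 _) := by
          rw [hq]; simp [Subsingleton.elim b 0]
        simpa [this] using (hum (idx ε)).symm
    | Sum.inr j =>
        constructor
        · intro hadj
          by_contra hmem
          have hne : j ≠ idx ε := by
            intro hh; apply hmem; rw [hq, hh]; simp
          exact hmlne (idx ε) j (Ne.symm hne) hadj
        · intro hmem
          rw [hq] at hmem
          simp only [Sym2.mem_iff, Sum.inr.injEq, reduceCtorEq, false_or] at hmem
          rw [hmem]
          exact hml (idx ε)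
  · show G.Adj (f (Sum.inr ε)) (f (Sum.inr ε')) ↔ False
    simp only [iff_false]
    by_cases hee : idx ε = idx ε'
    · show ¬ G.Adj (m (idx ε)) (m (idx ε'))
      rw [hee]; exact G.loopless.irrefl _
    · exact hmm _ _ hee


/-- every graph of the class `Γ` contains the long claw
`S_{2,2,2}` (the 1-subdivision of `K_{1,3}`) as an induced subgraph. -/
theorem inGamma_contains_long_claw {V : Type} [Fintype V] (G : SimpleGraph V)
    (M : Finset (Sym2 V)) (h : InGamma G M) :
    Nonempty (subdiv (completeBipartiteGraph (Fin 1) (Fin 3)) ↪g G) := by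
  classical
  obtain ⟨hcol, hconn, hdeg, hIM, hbig, _⟩ := h
  have hedge : ∀ e ∈ M, e ∈ G.edgeSet := fun e he => hIM.1 he
  have hdist := hIM.2
  set C : Finset V := Finset.univ.filter (fun v => coveredBy M v) with hCdef
  set U : Finset V := Finset.univ.filter (fun v => ¬ coveredBy M v) with hUdef
  -- every covered vertex has an uncovered neighbour
  have hnbr : ∀ v ∈ C, ∃ w ∈ U, G.Adj v w := by
    intro v hv
    simp only [hCdef, Finset.mem_filter, Finset.mem_univ, true_and] at hv
    obtain ⟨e, he, hve⟩ := hv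
    obtain ⟨w1, w2, hw12, hvw1, hvw2⟩ := hdeg v
    have hev : s(v, Sym2.Mem.other' hve) = e := Sym2.other_spec' hve
    set v' := Sym2.Mem.other' hve with hv'def
    set w := if w1 = v' then w2 else w1 with hwdef
    have hadj : G.Adj v w := by rw [hwdef]; split <;> assumption
    have hwv' : w ≠ v' := by
      rw [hwdef]; split
      · rename_i hh; intro heq; exact hw12 (hh.trans heq.symm)
      · assumption
    refine ⟨w, ?_, hadj⟩
    simp only [hUdef, Finset.mem_filter, Finset.mem_univ, true_and]
    rintro ⟨f, hf, hwf⟩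
    by_cases hfe : f = e
    · subst hfe
      rw [← hev] at hwf
      rcases Sym2.mem_iff.mp hwf with h1 | h1
      · exact G.irrefl (h1 ▸ hadj)
      · exact hwv' h1
    · exact (hdist e he f hf (fun hh => hfe hh.symm) v hve w hwf).2 hadj
  set P : Finset (V × V) :=
    Finset.univ.filter (fun p : V × V => p.1 ∈ C ∧ p.2 ∈ U ∧ G.Adj p.1 p.2) with hPdef
  choose nb hnbU hnbA using hnbr
  have hCP : C.card ≤ P.card := by
    rw [← Finset.card_attach (s := C)]
    apply Finset.card_le_card_of_injOn (fun v => (v.1, nb v.1 v.2))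
    · intro v _
      simp only [Finset.mem_coe, hPdef, Finset.mem_filter, Finset.mem_univ, true_and]
      exact ⟨v.2, hnbU v.1 v.2, hnbA v.1 v.2⟩
    · intro x _ y _ hxy
      exact Subtype.ext (congrArg Prod.fst hxy)
  -- |C| = 2 |M| (at least)
  have hfil2 : ∀ e ∈ M, (Finset.univ.filter (fun v => v ∈ e)).card = 2 := by
    intro e he
    induction e using Sym2.ind with
    | _ x y =>
      have hxy : G.Adj x y := G.mem_edgeSet.mp (hedge _ he)
      have hset : Finset.univ.filter (fun v => v ∈ s(x, y)) = {x, y} := by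
        ext v; simp [Sym2.mem_iff]
      rw [hset, Finset.card_insert_of_notMem (by simp [hxy.ne]), Finset.card_singleton]
  have hMC : 2 * M.card ≤ C.card := by
    have hdisjE : ∀ e ∈ M, ∀ f ∈ M, e ≠ f →
        Disjoint (Finset.univ.filter (fun v => v ∈ e)) (Finset.univ.filter (fun v => v ∈ f)) := by
      intro e he f hf hef
      rw [Finset.disjoint_left]
      intro v hv hv'
      simp only [Finset.mem_filter, Finset.mem_univ, true_and] at hv hv'
      exact (hdist e he f hf hef v hv v hv').1 rfl
    have hsub : M.biUnion (fun e => Finset.univ.filter (fun v => v ∈ e)) ⊆ C := by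
      intro v hv
      simp only [Finset.mem_biUnion, Finset.mem_filter, Finset.mem_univ, true_and] at hv
      obtain ⟨e, he, hve⟩ := hv
      simp only [hCdef, Finset.mem_filter, Finset.mem_univ, true_and]
      exact ⟨e, he, hve⟩
    calc 2 * M.card = ∑ e ∈ M, (Finset.univ.filter (fun v => v ∈ e)).card := by
            rw [Finset.sum_congr rfl hfil2, Finset.sum_const, smul_eq_mul, mul_comm]
      _ = (M.biUnion (fun e => Finset.univ.filter (fun v => v ∈ e))).card :=
            (Finset.card_biUnion hdisjE).symm
      _ ≤ C.card := Finset.card_le_card hsub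
  -- if every uncovered vertex had at most two covered neighbours, contradiction
  have hkey : ∃ u ∈ U, 3 ≤ (C.filter (fun v => G.Adj v u)).card := by
    by_contra hcon
    push_neg at hcon
    have hPU : P.card ≤ 2 * U.card := by
      have hsub : P ⊆ U.biUnion (fun u => (C.filter (fun v => G.Adj v u)).image (fun v => (v, u))) := by
        intro p hp
        simp only [hPdef, Finset.mem_filter, Finset.mem_univ, true_and] at hp
        simp only [Finset.mem_biUnion, Finset.mem_image, Finset.mem_filter]
        exact ⟨p.2, hp.2.1, p.1, ⟨hp.1, hp.2.2⟩, rfl⟩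
      calc P.card ≤ _ := Finset.card_le_card hsub
        _ ≤ ∑ u ∈ U, ((C.filter (fun v => G.Adj v u)).image (fun v => (v, u))).card :=
            Finset.card_biUnion_le
        _ ≤ ∑ u ∈ U, 2 := by
            apply Finset.sum_le_sum
            intro u hu
            exact le_trans (Finset.card_image_le) (Nat.lt_succ_iff.mp (hcon u hu))
        _ = 2 * U.card := by rw [Finset.sum_const, smul_eq_mul, mul_comm]
    have hCU : C.card + U.card = Fintype.card V := by
      rw [hCdef, hUdef]
      exact Finset.card_filter_add_card_filter_not _
    rw [Nat.card_eq_fintype_card] at hbig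
    omega
  obtain ⟨u, hu, h3⟩ := hkey
  have huU : ¬ coveredBy M u := by
    simp only [hUdef, Finset.mem_filter, Finset.mem_univ, true_and] at hu
    exact hu
  obtain ⟨t, hts, htc⟩ := Finset.exists_subset_card_eq h3
  rw [Finset.card_eq_three] at htc
  obtain ⟨a, b, c, hab, hac, hbc, rfl⟩ := htc
  have hmem : ∀ x ∈ ({a, b, c} : Finset V), (coveredBy M x) ∧ G.Adj u x := by
    intro x hx
    have h1 := Finset.mem_filter.mp (hts hx)
    have h2 := Finset.mem_filter.mp h1.1
    exact ⟨h2.2, h1.2.symm⟩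
  obtain ⟨⟨ea, hea, haea⟩, hua⟩ := hmem a (by simp)
  obtain ⟨⟨eb, heb, hbeb⟩, hub⟩ := hmem b (by simp)
  obtain ⟨⟨ec, hec, hcec⟩, huc⟩ := hmem c (by simp)
  -- partners
  have hspa : s(a, Sym2.Mem.other' haea) = ea := Sym2.other_spec' haea
  have hspb : s(b, Sym2.Mem.other' hbeb) = eb := Sym2.other_spec' hbeb
  have hspc : s(c, Sym2.Mem.other' hcec) = ec := Sym2.other_spec' hcec
  set a' := Sym2.Mem.other' haea
  set b' := Sym2.Mem.other' hbeb
  set c' := Sym2.Mem.other' hcec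
  have haa' : G.Adj a a' := G.mem_edgeSet.mp (hspa ▸ hedge ea hea)
  have hbb' : G.Adj b b' := G.mem_edgeSet.mp (hspb ▸ hedge eb heb)
  have hcc' : G.Adj c c' := G.mem_edgeSet.mp (hspc ▸ hedge ec hec)
  have ha'ea : a' ∈ ea := hspa ▸ Sym2.mem_mk_right a a'
  have hb'eb : b' ∈ eb := hspb ▸ Sym2.mem_mk_right b b'
  have hc'ec : c' ∈ ec := hspc ▸ Sym2.mem_mk_right c c'
  -- the three edges are pairwise distinct
  have hedist : ∀ x y : V, ∀ ex ey : Sym2 V, ex ∈ M → x ∈ ex → y ∈ ey →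
      G.Adj u x → G.Adj u y → x ≠ y → ex ≠ ey := by
    intro x y ex ey hex hxex hyey hux huy hxy heq
    subst heq
    have hmm := (Sym2.mem_and_mem_iff hxy).mp ⟨hxex, hyey⟩
    have : G.Adj x y := G.mem_edgeSet.mp (hmm ▸ hedge ex hex)
    exact tri_free hcol hux this huy
  have hEab : ea ≠ eb := hedist a b ea eb hea haea hbeb hua hub hab
  have hEac : ea ≠ ec := hedist a c ea ec hea haea hcec hua huc hac
  have hEbc : eb ≠ ec := hedist b c eb ec heb hbeb hcec hub huc hbc
  -- u is not adjacent to partners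
  have hua' : ¬ G.Adj u a' := tri_free hcol hua haa'
  have hub' : ¬ G.Adj u b' := tri_free hcol hub hbb'
  have huc' : ¬ G.Adj u c' := tri_free hcol huc hcc'
  -- u is uncovered hence differs from all eight endpoints
  have hux : ∀ x : V, ∀ ex ∈ M, x ∈ ex → u ≠ x := by
    rintro x ex hex hxex rfl
    exact huU ⟨ex, hex, hxex⟩
  -- now feed data into claw_embed
  set m : Fin 3 → V := ![a, b, c] with hm
  set l : Fin 3 → V := ![a', b', c'] with hl
  set ee : Fin 3 → Sym2 V := ![ea, eb, ec] with hee
  have heeM : ∀ j, ee j ∈ M := by intro j; fin_cases j; exacts [hea, heb, hec]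
  have hmee : ∀ j, m j ∈ ee j := by intro j; fin_cases j; exacts [haea, hbeb, hcec]
  have hlee : ∀ j, l j ∈ ee j := by intro j; fin_cases j; exacts [ha'ea, hb'eb, hc'ec]
  have heeinj : ∀ j j' : Fin 3, j ≠ j' → ee j ≠ ee j' := by
    intro j j' hne
    fin_cases j <;> fin_cases j' <;>
      first
        | exact absurd rfl hne
        | exact hEab
        | exact hEab.symm
        | exact hEac
        | exact hEac.symm
        | exact hEbc
        | exact hEbc.symm
  have hcross : ∀ j j' : Fin 3, j ≠ j' → ∀ x ∈ ee j, ∀ y ∈ ee j', x ≠ y ∧ ¬ G.Adj x y :=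
    fun j j' hne => hdist (ee j) (heeM j) (ee j') (heeM j') (heeinj j j' hne)
  have hum : ∀ j, G.Adj u (m j) := by intro j; fin_cases j; exacts [hua, hub, huc]
  have hml : ∀ j, G.Adj (m j) (l j) := by intro j; fin_cases j; exacts [haa', hbb', hcc']
  have hul : ∀ j, ¬ G.Adj u (l j) := by intro j; fin_cases j; exacts [hua', hub', huc']
  have hmm' : ∀ j j', j ≠ j' → ¬ G.Adj (m j) (m j') :=
    fun j j' hne => (hcross j j' hne (m j) (hmee j) (m j') (hmee j')).2
  have hll' : ∀ j j', j ≠ j' → ¬ G.Adj (l j) (l j') :=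
    fun j j' hne => (hcross j j' hne (l j) (hlee j) (l j') (hlee j')).2
  have hmlne : ∀ j j', j ≠ j' → ¬ G.Adj (m j) (l j') :=
    fun j j' hne => (hcross j j' hne (m j) (hmee j) (l j') (hlee j')).2
  have hu_m : ∀ j, u ≠ m j := fun j => hux (m j) (ee j) (heeM j) (hmee j)
  have hu_l : ∀ j, u ≠ l j := fun j => hux (l j) (ee j) (heeM j) (hlee j)
  have hm_inj : Function.Injective m := by
    intro j j' hjj
    by_contra hne
    exact (hcross j j' hne (m j) (hmee j) (m j') (hmee j')).1 hjj
  have hl_inj : Function.Injective l := by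
    intro j j' hjj
    by_contra hne
    exact (hcross j j' hne (l j) (hlee j) (l j') (hlee j')).1 hjj
  have hm_l : ∀ j j', m j ≠ l j' := by
    intro j j'
    by_cases hjj : j = j'
    · subst hjj
      have := hml j
      intro heq
      exact G.irrefl (heq ▸ this)
    · exact (hcross j j' hjj (m j) (hmee j) (l j') (hlee j')).1
  exact claw_embed G u m l hum hml hul hmm' hll' hmlne hu_m hu_l hm_inj hl_inj hm_l

end Paper
end
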